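/- For any point x in R^d modulo R·1, the tropical distance from x to the tropical hyperplane H_0 defined by the zero normal vector equals the difference between the largest and the second largest coordinate of x. -/

import Mathlib

/-- The tropical distance on `ℝ^d` (descending to `ℝ^d / ℝ·1`). -/
noncomputable def dtr {d : ℕ} (v w : Fin d → ℝ) : ℝ :=
  (⨆ i, (v i - w i)) - ⨅ i, (v i - w i)

/-- `y` lies on the tropical hyperplane with normal vector `ω`:
the maximum of `ω i + y i` is attained at least twice. -/
def onTropHyp {d : ℕ} (ω y : Fin d → ℝ) : Prop :=
  ∃ i j : Fin d, i ≠ j ∧ (∀ k, ω k + y k ≤ ω i + y i) ∧ ω i + y i = ω j + y j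

/-- the tropical distance from `x` to the tropical hyperplane `H_0`
(defined by the zero normal vector) equals the largest coordinate of `x` minus the
second largest coordinate of `x`. -/
theorem trop_dist_to_zero_hyperplane {d : ℕ} (hd : 2 ≤ d) (x : Fin d → ℝ) :
    sInf {r : ℝ | ∃ y : Fin d → ℝ, onTropHyp (fun _ => 0) y ∧ r = dtr x y}
      = ⨆ i : Fin d, (x i - ⨆ j : {j : Fin d // j ≠ i}, x j) := by
  haveI : NeZero d := ⟨by omega⟩
  have hcard : 1 < Fintype.card (Fin d) := by rw [Fintype.card_fin]; omega
  haveI hne : ∀ i : Fin d, Nonempty {j : Fin d // j ≠ i} := by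
    intro i
    obtain ⟨c, hc⟩ := Fintype.exists_ne_of_one_lt_card hcard i
    exact ⟨⟨c, hc⟩⟩
  obtain ⟨a, ha⟩ := Finite.exists_max x
  obtain ⟨b, hbmax⟩ := Finite.exists_max (fun j : {j : Fin d // j ≠ a} => x j.1)
  have hba : x b.1 ≤ x a := ha b.1
  -- the sup over j ≠ a equals x b
  have hSa : (⨆ j : {j : Fin d // j ≠ a}, x j.1) = x b.1 :=
    le_antisymm (ciSup_le hbmax) (le_ciSup (f := fun j : {j : Fin d // j ≠ a} => x j.1) (Finite.bddAbove_range _) b)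
  have hS_ge : ∀ (i j : Fin d), j ≠ i → x j ≤ ⨆ j : {j : Fin d // j ≠ i}, x j.1 :=
    fun i j hj => le_ciSup (f := fun j : {j : Fin d // j ≠ i} => x j.1) (Finite.bddAbove_range _) (⟨j, hj⟩ : {j : Fin d // j ≠ i})
  -- the RHS equals x a - x b
  have hRHS : (⨆ i : Fin d, (x i - ⨆ j : {j : Fin d // j ≠ i}, x j.1)) = x a - x b.1 := by
    apply le_antisymm
    · apply ciSup_le
      intro i
      by_cases hia : i = a
      · subst hia; rw [hSa]
      · have h1 : x a ≤ ⨆ j : {j : Fin d // j ≠ i}, x j.1 :=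
          hS_ge i a (fun h => hia h.symm)
        have h3 : x i ≤ x a := ha i
        linarith
    · have := le_ciSup (Finite.bddAbove_range
        (fun i : Fin d => x i - ⨆ j : {j : Fin d // j ≠ i}, x j.1)) a
      rw [hSa] at this
      exact this
  -- lower bound
  have hlow : ∀ r ∈ {r : ℝ | ∃ y : Fin d → ℝ,
      onTropHyp (fun _ => 0) y ∧ r = dtr x y}, x a - x b.1 ≤ r := by
    rintro r ⟨y, ⟨i, j, hij, hmax, heq⟩, rfl⟩
    simp only [zero_add] at hmax heq
    obtain ⟨c, hca, hcmax⟩ : ∃ c, c ≠ a ∧ ∀ k, y k ≤ y c := by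
      by_cases hia : i = a
      · exact ⟨j, by rw [← hia]; exact hij.symm, fun k => (hmax k).trans_eq heq⟩
      · exact ⟨i, hia, hmax⟩
    have h1 : x a - y a ≤ ⨆ k, (x k - y k) := le_ciSup (f := fun k => x k - y k) (Finite.bddAbove_range _) a
    have h2 : (⨅ k, (x k - y k)) ≤ x c - y c := ciInf_le (f := fun k => x k - y k) (Finite.bddBelow_range _) c
    have h3 : x c ≤ x b.1 := hbmax ⟨c, hca⟩
    have h4 : y a ≤ y c := hcmax a
    unfold dtr
    linarith
  -- the witness
  set y0 : Fin d → ℝ := fun k => if k = a then x b.1 else x k with hy0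
  have hy0a : y0 a = x b.1 := if_pos rfl
  have hy0b : y0 b.1 = x b.1 := if_neg b.2
  have hy0k : ∀ k, k ≠ a → y0 k = x k := fun k hk => if_neg hk
  have hyp : onTropHyp (fun _ => 0) y0 := by
    refine ⟨a, b.1, Ne.symm b.2, ?_, by simp [hy0a, hy0b]⟩
    intro k
    simp only [zero_add, hy0a]
    by_cases hk : k = a
    · rw [hk, hy0a]
    · rw [hy0k k hk]; exact hbmax ⟨k, hk⟩
  have hval : dtr x y0 = x a - x b.1 := by
    have hsup : (⨆ k, (x k - y0 k)) = x a - x b.1 := by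
      apply le_antisymm
      · apply ciSup_le
        intro k
        by_cases hk : k = a
        · rw [hk, hy0a]
        · rw [hy0k k hk]; simp; linarith
      · have := le_ciSup (Finite.bddAbove_range (fun k => x k - y0 k)) a
        rwa [hy0a] at this
    have hinf : (⨅ k, (x k - y0 k)) = 0 := by
      apply le_antisymm
      · have := ciInf_le (Finite.bddBelow_range (fun k => x k - y0 k)) b.1
        rwa [hy0b, sub_self] at this
      · apply le_ciInf
        intro k
        by_cases hk : k = a
        · rw [hk, hy0a]; linarith
        · rw [hy0k k hk]; simp
    rw [dtr, hsup, hinf, sub_zero]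
  rw [hRHS]
  apply le_antisymm
  · exact csInf_le ⟨x a - x b.1, hlow⟩ ⟨y0, hyp, hval.symm⟩
  · exact le_csInf ⟨dtr x y0, y0, hyp, rfl⟩ hlow
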